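/- Let d be a positive even integer. For each positive integer n, there exists a finitely supported sequence ε : ℕ → ℕ satisfying the Chung–Graham rule of expansion for even interval d such that n = Σ_{k=1}^∞ ε_k · F_{2+d(k-1)}. -/

import Mathlib

/-- Lucas sequence: K 1 = 1, K 2 = 3, K (k+2) = K (k+1) + K k. -/
def lucas : ℕ → ℕ
  | 0 => 2
  | 1 => 1
  | n + 2 => lucas (n + 1) + lucas n

/-- The Chung–Graham rule of expansion for even interval `d`,
with `A = lucas d - 1` and `B = Nat.fib (2 + d) - 1`.
Sequences are indexed from 1 (so `ε 0 = 0`) and finitely supported. -/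
def CGRule (d : ℕ) (ε : ℕ → ℕ) : Prop :=
  ε 0 = 0 ∧
  {k | ε k ≠ 0}.Finite ∧
  ε 1 ≤ Nat.fib (2 + d) - 1 ∧
  (∀ k, 2 ≤ k → ε k ≤ lucas d - 1) ∧
  (∀ m, 2 ≤ m → ε m = lucas d - 1 →
    (∀ k, 2 ≤ k → k ≤ m - 1 → ε k = lucas d - 1 - 1) →
    ε 1 < Nat.fib (2 + d) - 1) ∧
  (∀ k j, 2 ≤ k → k < j → ε k = lucas d - 1 → ε j = lucas d - 1 →
    ∃ c, k < c ∧ c < j ∧ ε c ≤ lucas d - 1 - 2)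

/-- Lexicographic-from-the-right strict order on coefficient sequences. -/
def CGlt (ε τ : ℕ → ℕ) : Prop :=
  ∃ ℓ, ε ℓ < τ ℓ ∧ ∀ k, ℓ < k → ε k = τ k

open Nat

lemma lucas_eq : ∀ n, lucas (n + 1) = fib n + fib (n + 2) := by
  intro n
  induction n using Nat.twoStepInduction with
  | zero => decide
  | one => decide
  | more n ih1 ih2 =>
    show lucas (n + 2) + lucas (n + 1) = fib (n + 2) + fib (n + 2 + 2)
    have ih2' : lucas (n + 2) = fib (n + 1) + fib (n + 3) := ih2
    have h1 : fib (n + 2) = fib n + fib (n + 1) := fib_add_two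
    have h2 : fib (n + 3) = fib (n + 1) + fib (n + 2) := fib_add_two
    have h3 : fib (n + 2 + 2) = fib (n + 2) + fib (n + 3) := fib_add_two
    omega

lemma lucas_ge_three (d : ℕ) (hd : 2 ≤ d) : 3 ≤ lucas d := by
  obtain ⟨n, rfl⟩ : ∃ n, d = n + 1 := ⟨d - 1, by omega⟩
  rw [lucas_eq]
  have h1 : fib 1 ≤ fib n := fib_mono (by omega)
  have h2 : fib 3 ≤ fib (n + 2) := fib_mono (by omega)
  simp [fib_one] at h1
  have : fib 3 = 2 := by decide
  omega

/-- joint Cassini identities -/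
lemma cassini : ∀ e, fib (2*e+2)^2 + 1 = fib (2*e+1) * fib (2*e+3) ∧
    fib (2*e+1)^2 = fib (2*e) * fib (2*e+2) + 1 := by
  intro e
  induction e with
  | zero => decide
  | succ e ih =>
    obtain ⟨A, B⟩ := ih
    have h1 : fib (2*e+3) = fib (2*e+1) + fib (2*e+2) := fib_add_two
    have h2 : fib (2*e+4) = fib (2*e+2) + fib (2*e+3) := fib_add_two
    have h3 : fib (2*e+5) = fib (2*e+3) + fib (2*e+4) := fib_add_two
    have B' : fib (2*e+3)^2 = fib (2*e+2) * fib (2*e+4) + 1 := by nlinarith [A, h1, h2]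
    have A' : fib (2*e+4)^2 + 1 = fib (2*e+3) * fib (2*e+5) := by nlinarith [B', h2, h3]
    constructor
    · show fib (2*(e+1)+2)^2 + 1 = fib (2*(e+1)+1) * fib (2*(e+1)+3)
      convert A' using 3 <;> ring
    · show fib (2*(e+1)+1)^2 = fib (2*(e+1)) * fib (2*(e+1)+2) + 1
      convert B' using 3 <;> ring

/-- Key identity: `F(m+2d) + F(m) = L(d)·F(m+d)` for even `d`. -/
lemma key (d : ℕ) (hd : 1 ≤ d) (hde : Even d) :
    ∀ m, fib (m + 2*d) + fib m = lucas d * fib (m + d) := by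
  obtain ⟨e, rfl⟩ := hde
  have he : 1 ≤ e := by omega
  have hlu : lucas (e + e) = fib (2*e - 1) + fib (2*e + 1) := by
    have := lucas_eq (2*e - 1)
    rw [show 2*e - 1 + 1 = e + e by omega] at this
    rw [this, show 2*e - 1 + 2 = 2*e + 1 by omega]
  have base0 : fib (0 + 2*(e+e)) + fib 0 = lucas (e+e) * fib (0 + (e+e)) := by
    simp only [Nat.zero_add, fib_zero, Nat.add_zero]
    rw [hlu, show 2*(e+e) = 2*(2*e) by ring, fib_two_mul, show e + e = 2*e by ring]
    have hle : fib (2*e) ≤ fib (2*e + 1) := fib_le_fib_succ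
    have hrec : fib (2*e + 1) = fib (2*e - 1) + fib (2*e) := by
      have := fib_add_two (n := 2*e - 1)
      rw [show 2*e - 1 + 2 = 2*e + 1 by omega, show 2*e - 1 + 1 = 2*e by omega] at this
      omega
    have : 2 * fib (2*e + 1) - fib (2*e) = fib (2*e - 1) + fib (2*e + 1) := by omega
    rw [this, Nat.mul_comm]
  have base1 : fib (1 + 2*(e+e)) + fib 1 = lucas (e+e) * fib (1 + (e+e)) := by
    rw [hlu, fib_one, show 1 + 2*(e+e) = 2*(2*e) + 1 by ring, fib_two_mul_add_one,
      show 1 + (e+e) = 2*e + 1 by ring]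
    obtain ⟨f, rfl⟩ : ∃ f, e = f + 1 := ⟨e - 1, by omega⟩
    have hc := (cassini f).1
    simp only [show 2*(f+1) = 2*f + 2 by ring, show 2*f+2+1 = 2*f+3 by ring,
      show 2*f+2-1 = 2*f+1 by omega]
    nlinarith [hc]
  intro m
  induction m using Nat.twoStepInduction with
  | zero => exact base0
  | one => exact base1
  | more m ih1 ih2 =>
    have r1 : fib (m + 2 + 2*(e+e)) = fib (m + 2*(e+e)) + fib (m + 1 + 2*(e+e)) := by
      have h := fib_add_two (n := m + 2*(e+e))
      rw [show m + 2*(e+e) + 2 = m + 2 + 2*(e+e) by omega,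
          show m + 2*(e+e) + 1 = m + 1 + 2*(e+e) by omega] at h
      exact h
    have r2 : fib (m + 2) = fib m + fib (m + 1) := fib_add_two
    have r3 : fib (m + 2 + (e+e)) = fib (m + (e+e)) + fib (m + 1 + (e+e)) := by
      have h := fib_add_two (n := m + (e+e))
      rw [show m + (e+e) + 2 = m + 2 + (e+e) by omega,
          show m + (e+e) + 1 = m + 1 + (e+e) by omega] at h
      exact h
    rw [r1, r2, r3, Nat.mul_add (lucas (e+e)) (fib (m+(e+e))) (fib (m+1+(e+e))),
      ← ih1, ← ih2]
    ring

/-- Key identity in the form used below. -/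
lemma keyj (d : ℕ) (hd : 1 ≤ d) (hde : Even d) (j : ℕ) (hj : 2 ≤ j) :
    fib (2 + d*j) + fib (2 + d*(j-2)) = lucas d * fib (2 + d*(j-1)) := by
  obtain ⟨j', rfl⟩ : ∃ j', j = j' + 2 := ⟨j - 2, by omega⟩
  have h := key d hd hde (2 + d * j')
  rw [show 2 + d*j' + 2*d = 2 + d*(j'+2) by ring,
      show 2 + d*j' + d = 2 + d*(j'+1) by ring] at h
  show fib (2 + d*(j'+2)) + fib (2 + d*j') = lucas d * fib (2 + d*(j'+1))
  exact h

/-- Remainders of the greedy algorithm, from the top position `L` down. -/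
def cgs (d L n : ℕ) : ℕ → ℕ
  | 0 => n
  | t + 1 => cgs d L n t % Nat.fib (2 + d * (L - 1 - t))

/-- Greedy digits. -/
def cgd (d L n : ℕ) (j : ℕ) : ℕ :=
  if 1 ≤ j ∧ j ≤ L then cgs d L n (L - j) / Nat.fib (2 + d * (j - 1)) else 0

section
variable (d L n : ℕ)

lemma cgs_lt (t : ℕ) (h1 : 1 ≤ t) : cgs d L n t < fib (2 + d * (L - t)) := by
  obtain ⟨t', rfl⟩ : ∃ t', t = t' + 1 := ⟨t - 1, by omega⟩
  show cgs d L n t' % fib (2 + d * (L - 1 - t')) < _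
  rw [show L - 1 - t' = L - (t' + 1) by omega]
  exact Nat.mod_lt _ (fib_pos.mpr (by omega))

lemma cgs_lt' (hn : n < fib (2 + d * L)) (t : ℕ) : cgs d L n t < fib (2 + d * (L - t)) := by
  cases t with
  | zero => simpa [cgs] using hn
  | succ t => exact cgs_lt d L n (t + 1) (by omega)

lemma cgs_last (hL : 1 ≤ L) : cgs d L n L = 0 := by
  obtain ⟨L', rfl⟩ : ∃ L', L = L' + 1 := ⟨L - 1, by omega⟩
  show cgs d (L' + 1) n L' % fib (2 + d * (L' + 1 - 1 - L')) = 0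
  rw [show L' + 1 - 1 - L' = 0 by omega]
  simp [Nat.mod_one]

lemma cgs_step (j : ℕ) (h1 : 1 ≤ j) (h2 : j ≤ L) :
    cgs d L n (L - j) = cgd d L n j * fib (2 + d * (j - 1)) + cgs d L n (L - j + 1) := by
  have hd : cgd d L n j = cgs d L n (L - j) / fib (2 + d * (j - 1)) := by
    unfold cgd; rw [if_pos ⟨h1, h2⟩]
  have hs : cgs d L n (L - j + 1) = cgs d L n (L - j) % fib (2 + d * (L - 1 - (L - j))) := rfl
  rw [show L - 1 - (L - j) = j - 1 by omega] at hs
  rw [hd, hs]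
  exact (Nat.div_add_mod' _ _).symm

lemma cgd_out (j : ℕ) (h : ¬(1 ≤ j ∧ j ≤ L)) : cgd d L n j = 0 := by
  unfold cgd; rw [if_neg h]

lemma cgs_sum : ∀ t, t ≤ L →
    n = (∑ j ∈ Finset.Ioc (L - t) L, cgd d L n j * fib (2 + d * (j - 1))) + cgs d L n t := by
  intro t
  induction t with
  | zero => intro _; simp [cgs]
  | succ t ih =>
    intro ht
    have iht := ih (by omega)
    have hins : Finset.Ioc (L - (t+1)) L = insert (L - t) (Finset.Ioc (L - t) L) := by
      ext x; simp only [Finset.mem_Ioc, Finset.mem_insert]; omega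
    have hnotmem : L - t ∉ Finset.Ioc (L - t) L := by simp
    have hstep := cgs_step d L n (L - t) (by omega) (by omega)
    rw [show L - (L - t) = t by omega] at hstep
    rw [hins, Finset.sum_insert hnotmem]
    linarith [iht, hstep]

/-- "Blocked" invariant at position `j`. -/
def Blk (j : ℕ) : Prop :=
  cgs d L n (L - j) + fib (2 + d * (j - 1)) < fib (2 + d * j)

lemma mulsplit1 (a F : ℕ) (ha : 1 ≤ a) : a * F = (a - 1) * F + F := by
  have h1 : a - 1 + 1 = a := by omega
  calc a * F = (a - 1 + 1) * F := by rw [h1]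
    _ = (a - 1) * F + F := by rw [Nat.succ_mul]

lemma mulsplit2 (a F : ℕ) (ha : 2 ≤ a) : a * F = (a - 2) * F + F + F := by
  have h1 : a - 2 + 2 = a := by omega
  calc a * F = (a - 2 + 2) * F := by rw [h1]
    _ = (a - 2) * F + 2 * F := by rw [Nat.add_mul]
    _ = (a - 2) * F + F + F := by rw [Nat.two_mul]; omega

lemma even_two_le (d : ℕ) (hd1 : 1 ≤ d) (hde : Even d) : 2 ≤ d := by
  rcases hde with ⟨e, he⟩; omega

lemma D1 (hd1 : 1 ≤ d) (hde : Even d) (hn : n < fib (2 + d * L))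
    (j : ℕ) (h2 : 2 ≤ j) : cgd d L n j ≤ lucas d - 1 := by
  by_cases hjL : j ≤ L
  · have hs := cgs_lt' d L n hn (L - j)
    rw [show L - (L - j) = j by omega] at hs
    have hk := keyj d hd1 hde j h2
    have hF : 0 < fib (2 + d * (j-1)) := fib_pos.mpr (by omega)
    have hlt : cgs d L n (L - j) < lucas d * fib (2 + d * (j-1)) := by
      have : 0 < fib (2 + d * (j - 2)) := fib_pos.mpr (by omega)
      omega
    have hdiv : cgs d L n (L - j) / fib (2 + d * (j-1)) < lucas d :=
      (Nat.div_lt_iff_lt_mul hF).mpr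
        (by linarith [hlt, Nat.mul_comm (lucas d) (fib (2 + d * (j-1)))])
    have hdd : cgd d L n j = cgs d L n (L - j) / fib (2 + d * (j-1)) := by
      unfold cgd; rw [if_pos ⟨by omega, hjL⟩]
    omega
  · rw [cgd_out d L n j (by omega)]; omega

lemma P1 (hd1 : 1 ≤ d) (hde : Even d) (hn : n < fib (2 + d * L))
    (j : ℕ) (h2 : 2 ≤ j) (hjL : j ≤ L) (hA : lucas d - 1 ≤ cgd d L n j) :
    Blk d L n (j - 1) := by
  have hs : cgs d L n (L - j) < fib (2 + d * j) := by
    have := cgs_lt' d L n hn (L - j)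
    rwa [show L - (L - j) = j by omega] at this
  have hst := cgs_step d L n j (by omega) hjL
  have hk := keyj d hd1 hde j h2
  have hl3 : 3 ≤ lucas d := lucas_ge_three d (even_two_le d hd1 hde)
  have hq : (lucas d - 1) * fib (2 + d * (j-1)) ≤ cgd d L n j * fib (2 + d * (j-1)) :=
    Nat.mul_le_mul_right _ hA
  have hmul := mulsplit1 (lucas d) (fib (2 + d * (j-1))) (by omega)
  show cgs d L n (L - (j-1)) + fib (2 + d * (j - 1 - 1)) < fib (2 + d * (j - 1))
  rw [show L - (j - 1) = L - j + 1 by omega, show j - 1 - 1 = j - 2 by omega]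
  linarith [hs, hst, hk, hq, hmul]

lemma P2a (hd1 : 1 ≤ d) (hde : Even d)
    (j : ℕ) (h2 : 2 ≤ j) (hjL : j ≤ L) (hB : Blk d L n j) :
    cgd d L n j < lucas d - 1 := by
  have hk := keyj d hd1 hde j h2
  have hF : 0 < fib (2 + d * (j-1)) := fib_pos.mpr (by omega)
  have hl3 : 3 ≤ lucas d := lucas_ge_three d (even_two_le d hd1 hde)
  unfold Blk at hB
  have hmul := mulsplit1 (lucas d) (fib (2 + d * (j-1))) (by omega)
  have hlt : cgs d L n (L - j) < (lucas d - 1) * fib (2 + d * (j-1)) := by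
    linarith [hB, hk, hmul]
  have hdd : cgd d L n j = cgs d L n (L - j) / fib (2 + d * (j-1)) := by
    unfold cgd; rw [if_pos ⟨by omega, hjL⟩]
  rw [hdd]
  exact (Nat.div_lt_iff_lt_mul hF).mpr
    (by linarith [hlt, Nat.mul_comm (lucas d - 1) (fib (2 + d * (j-1)))])

lemma P2b (hd1 : 1 ≤ d) (hde : Even d)
    (j : ℕ) (h2 : 2 ≤ j) (hjL : j ≤ L) (hB : Blk d L n j)
    (hA1 : lucas d - 2 ≤ cgd d L n j) : Blk d L n (j - 1) := by
  have hk := keyj d hd1 hde j h2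
  have hl3 : 3 ≤ lucas d := lucas_ge_three d (even_two_le d hd1 hde)
  have hst := cgs_step d L n j (by omega) hjL
  unfold Blk at hB
  have hq : (lucas d - 2) * fib (2 + d * (j-1)) ≤ cgd d L n j * fib (2 + d * (j-1)) :=
    Nat.mul_le_mul_right _ hA1
  have hmul := mulsplit2 (lucas d) (fib (2 + d * (j-1))) (by omega)
  show cgs d L n (L - (j-1)) + fib (2 + d * (j - 1 - 1)) < fib (2 + d * (j - 1))
  rw [show L - (j - 1) = L - j + 1 by omega, show j - 1 - 1 = j - 2 by omega]
  linarith [hB, hk, hst, hq, hmul]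

lemma P3 (hL : 1 ≤ L) (hB : Blk d L n 1) : cgd d L n 1 < fib (2 + d) - 1 := by
  unfold Blk at hB
  simp only [Nat.sub_self, Nat.mul_zero, Nat.add_zero, Nat.mul_one] at hB
  have hdd : cgd d L n 1 = cgs d L n (L - 1) / fib (2 + d * 0) := by
    unfold cgd; rw [if_pos ⟨le_rfl, hL⟩]
  rw [hdd]
  simp only [Nat.mul_zero, Nat.add_zero]
  have h2 : fib 2 = 1 := by decide
  rw [h2, Nat.div_one]
  omega

end

theorem stmt_8 (d : ℕ) (hd : 0 < d) (hde : Even d) (n : ℕ) (hn : 1 ≤ n) :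
    ∃ ε : ℕ → ℕ, CGRule d ε ∧ n = ∑ᶠ k, ε k * Nat.fib (2 + d * (k - 1)) := by
  have hd1 : 1 ≤ d := hd
  have hd2 : 2 ≤ d := even_two_le d hd1 hde
  have hl3 : 3 ≤ lucas d := lucas_ge_three d hd2
  set L := n + 5 with hL
  have hLn : n < fib (2 + d * L) := by
    have h1 : L ≤ 2 + d * L := by
      have : L ≤ d * L := Nat.le_mul_of_pos_left L hd
      omega
    have h2 : fib L ≤ fib (2 + d * L) := fib_mono h1
    have h3 : L ≤ fib L := Nat.le_fib_self (by omega)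
    omega
  have hL1 : 1 ≤ L := by omega
  refine ⟨cgd d L n, ⟨?_, ?_, ?_, ?_, ?_, ?_⟩, ?_⟩
  · exact cgd_out d L n 0 (by omega)
  · apply Set.Finite.subset (Set.finite_Icc 1 L)
    intro k hk
    simp only [Set.mem_setOf_eq] at hk
    by_contra hmem
    simp only [Set.mem_Icc] at hmem
    exact hk (cgd_out d L n k (by omega))
  · -- ε 1 ≤ B
    have hs := cgs_lt' d L n hLn (L - 1)
    rw [show L - (L - 1) = 1 by omega] at hs
    have hdd : cgd d L n 1 = cgs d L n (L - 1) / fib (2 + d * 0) := by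
      unfold cgd; rw [if_pos ⟨le_rfl, hL1⟩]
    rw [hdd]
    simp only [Nat.mul_zero, Nat.add_zero, Nat.mul_one] at *
    rw [show fib 2 = 1 by decide, Nat.div_one]
    omega
  · -- digit bound
    exact fun k hk => D1 d L n hd1 hde hLn k hk
  · -- rule 2
    intro m hm hmA hprev
    have hmL : m ≤ L := by
      by_contra h
      rw [cgd_out d L n m (by omega)] at hmA
      omega
    have hB1 : Blk d L n 1 := by
      have desc : ∀ i, i ≤ m - 2 → Blk d L n (m - 1 - i) := by
        intro i
        induction i with
        | zero =>
          intro _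
          simpa using P1 d L n hd1 hde hLn m hm hmL (le_of_eq hmA.symm)
        | succ i ih =>
          intro hi
          have hB := ih (by omega)
          have hc2 : 2 ≤ m - 1 - i := by omega
          have hcL : m - 1 - i ≤ L := by omega
          have hval := hprev (m - 1 - i) hc2 (by omega)
          have := P2b d L n hd1 hde (m - 1 - i) hc2 hcL hB (by omega)
          rwa [show m - 1 - i - 1 = m - 1 - (i + 1) by omega] at this
      have := desc (m - 2) le_rfl
      rwa [show m - 1 - (m - 2) = 1 by omega] at this
    have := P3 d L n hL1 hB1
    omega
  · -- rule 3
    intro k j h2k hkj hek hej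
    have hjL : j ≤ L := by
      by_contra h
      rw [cgd_out d L n j (by omega)] at hej
      omega
    by_contra hcon
    push_neg at hcon
    have hge : ∀ c, k < c → c < j → lucas d - 2 ≤ cgd d L n c := by
      intro c h1 h2
      have := hcon c h1 h2
      omega
    have hBk : Blk d L n k := by
      have desc : ∀ i, i ≤ j - 1 - k → Blk d L n (j - 1 - i) := by
        intro i
        induction i with
        | zero =>
          intro _
          simpa using P1 d L n hd1 hde hLn j (by omega) hjL (le_of_eq hej.symm)
        | succ i ih =>
          intro hi
          have hB := ih (by omega)
          have hc2 : 2 ≤ j - 1 - i := by omega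
          have hcL : j - 1 - i ≤ L := by omega
          have hval := hge (j - 1 - i) (by omega) (by omega)
          have := P2b d L n hd1 hde (j - 1 - i) hc2 hcL hB hval
          rwa [show j - 1 - i - 1 = j - 1 - (i + 1) by omega] at this
      have := desc (j - 1 - k) le_rfl
      rwa [show j - 1 - (j - 1 - k) = k by omega] at this
    have := P2a d L n hd1 hde k h2k (by omega) hBk
    omega
  · -- the sum
    have hsum := cgs_sum d L n L le_rfl
    rw [cgs_last d L n hL1, Nat.sub_self] at hsum
    rw [finsum_eq_finset_sum_of_support_subset _ (s := Finset.Ioc 0 L) ?_]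
    · simpa using hsum
    · intro x hx
      simp only [Function.mem_support, ne_eq] at hx
      simp only [Finset.coe_Ioc, Set.mem_Ioc]
      by_contra h
      exact hx (by rw [cgd_out d L n x (by omega)]; ring)
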